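/- arXiv:2605.18433 — 3 statements merged into one kernel-verified Lean document; each statement's English description precedes it below -/
import Mathlib

section
/- Let A be a unital C*-algebra, let H₁ and H₂ be complex Hilbert spaces, and let π₁ : A → B(H₁) and π₂ : A → B(H₂) be unital *-homomorphisms into the bounded operators. Then the following are equivalent: (i) ‖π₁(a)‖ ≤ ‖π₂(a)‖ for all a ∈ A; (ii) ker(π₂) ⊆ ker(π₁); (iii) for every ξ ∈ H₁, the vector state φ_ξ lies in the weak*-closure of the linear span of {φ_ζ : ζ ∈ H₂} inside the continuous dual A*; (iv) for every ξ ∈ H₁, the vector state φ_ξ lies in the weak*-closure of the convex hull of {φ_ζ : ζ ∈ H₂, ‖ζ‖ = ‖ξ‖}. -/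
open scoped CStarAlgebra InnerProductSpace

/-- The vector state `a ↦ ⟪ξ, π a ξ⟫` associated to a `*`-representation `π` of a unital
C*-algebra on a Hilbert space and a vector `ξ`, regarded as an element of the continuous
dual of `A` equipped with the weak-* topology. -/
noncomputable def vecState {A H : Type*} [CStarAlgebra A] [NormedAddCommGroup H]
    [InnerProductSpace ℂ H] [CompleteSpace H] (π : A →⋆ₐ[ℂ] (H →L[ℂ] H)) (ξ : H) :
    WeakDual ℂ A :=
  ((innerSL ℂ ξ).comp (ContinuousLinearMap.apply ℂ H ξ)).comp
    { toLinearMap := (π : A →ₐ[ℂ] (H →L[ℂ] H)).toLinearMap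
      cont := map_continuous π }

instance VecStateAux.instIsScalarTower {A : Type*} [CStarAlgebra A] :
    IsScalarTower ℝ ℂ (WeakDual ℂ A) :=
  inferInstanceAs (IsScalarTower ℝ ℂ (A →L[ℂ] ℂ))

instance VecStateAux.instContinuousSMul {A : Type*} [CStarAlgebra A] :
    @ContinuousSMul ℝ (WeakDual ℂ A) (Module.complexToReal (WeakDual ℂ A)).toSMul _ _ :=
  WeakDual.instContinuousSMul ℝ

instance VecStateAux.instLocallyConvexSpace {A : Type*} [CStarAlgebra A] :
    @LocallyConvexSpace ℝ (WeakDual ℂ A) _ _ _ (Module.complexToReal (WeakDual ℂ A)) _ :=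
  WeakBilin.locallyConvexSpace (B := topDualPairing ℂ A)

section Aux

variable {A : Type*} [CStarAlgebra A]

theorem VecStateAux.exists_eval (G : WeakDual ℂ A →ₗ[ℂ] ℂ) (hG : Continuous G) :
    ∃ b : A, ∀ φ : WeakDual ℂ A, G φ = φ b := by
  classical
  set B := topDualPairing ℂ A with hB
  have hp : WithSeminorms (LinearMap.toSeminormFamily B :
      A → Seminorm ℂ (WeakDual ℂ A)) := LinearMap.weakBilin_withSeminorms B
  let q : Seminorm ℂ (WeakDual ℂ A) := (normSeminorm ℂ ℂ).comp G
  have hq : Continuous q := by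
    show Continuous fun φ => ‖G φ‖
    exact continuous_norm.comp hG
  obtain ⟨s, C, -, hC⟩ := Seminorm.bound_of_continuous hp q hq
  let ev : A →ₗ[ℂ] (WeakDual ℂ A) →ₗ[ℂ] ℂ := B.flip
  have hker : ⨅ i : s, LinearMap.ker (ev (i : A)) ≤ LinearMap.ker G := by
    intro φ hφ
    simp only [Submodule.mem_iInf, LinearMap.mem_ker] at hφ ⊢
    have h0 : ∀ a ∈ s, (LinearMap.toSeminormFamily B a) φ ≤ 0 := by
      intro a ha
      change ‖B φ a‖ ≤ 0
      have : B φ a = 0 := hφ ⟨a, ha⟩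
      simp [this]
    have hsup : (s.sup (LinearMap.toSeminormFamily B)) φ ≤ 0 :=
      Seminorm.finset_sup_apply_le le_rfl h0
    have hq0 : q φ ≤ 0 := by
      refine (hC φ).trans ?_
      have h1 : (C • s.sup (LinearMap.toSeminormFamily B)) φ
          = (C : ℝ) * (s.sup (LinearMap.toSeminormFamily B)) φ := rfl
      show (C • s.sup (LinearMap.toSeminormFamily B)) φ ≤ 0
      rw [h1]
      exact mul_nonpos_of_nonneg_of_nonpos C.coe_nonneg hsup
    have : ‖G φ‖ ≤ 0 := hq0
    simpa using le_antisymm this (norm_nonneg _)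
  have hspan := mem_span_of_iInf_ker_le_ker (𝕜 := ℂ) hker
  have hle : Submodule.span ℂ (Set.range fun i : s => ev (i : A)) ≤ LinearMap.range ev := by
    rw [Submodule.span_le]
    rintro _ ⟨i, rfl⟩
    exact ⟨i, rfl⟩
  obtain ⟨b, hb⟩ := hle hspan
  exact ⟨b, fun φ => by rw [← hb]; rfl⟩

theorem VecStateAux.exists_re_eval (g : WeakDual ℂ A →L[ℝ] ℝ) :
    ∃ b : A, ∀ φ : WeakDual ℂ A, g φ = (φ b).re := by
  set G : WeakDual ℂ A →ₗ[ℂ] ℂ := LinearMap.extendTo𝕜' g.toLinearMap with hGdef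
  have hG : Continuous G := by
    have h : (G : WeakDual ℂ A → ℂ)
        = fun φ => (g φ : ℂ) - Complex.I * (g ((Complex.I : ℂ) • φ) : ℂ) := by
      ext φ; exact LinearMap.extendTo𝕜'_apply g.toLinearMap φ
    rw [h]
    fun_prop
  obtain ⟨b, hb⟩ := VecStateAux.exists_eval G hG
  refine ⟨b, fun φ => ?_⟩
  rw [← hb φ]
  have h2 := LinearMap.extendTo𝕜'_apply_re (𝕜 := ℂ) g.toLinearMap φ
  rw [show (RCLike.re : ℂ →+ ℝ)
      ((Module.Dual.extendRCLike g.toLinearMap : WeakDual ℂ A →ₗ[ℂ] ℂ) φ) = (G φ).re from rfl] at h2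
  exact h2.symm

variable {H : Type*} [NormedAddCommGroup H] [InnerProductSpace ℂ H] [CompleteSpace H]

theorem VecStateAux.inner_re_smul (x : H) (t : ℝ) :
    RCLike.re ⟪x, (t : ℝ) • x⟫_ℂ = t * ‖x‖ ^ 2 := by
  rw [RCLike.real_smul_eq_coe_smul (K := ℂ), inner_smul_right]
  simp [inner_self_eq_norm_sq, ← Complex.ofReal_pow]

theorem VecStateAux.le_algebraMap_iff {T : H →L[ℂ] H} (hT : IsSelfAdjoint T) (t : ℝ) :
    T ≤ algebraMap ℝ (H →L[ℂ] H) t ↔ ∀ x : H, RCLike.re ⟪x, T x⟫_ℂ ≤ t * ‖x‖ ^ 2 := by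
  have halg : ∀ x : H, algebraMap ℝ (H →L[ℂ] H) t x = t • x := by
    intro x; rw [Algebra.algebraMap_eq_smul_one]; rfl
  have hsa : IsSelfAdjoint (algebraMap ℝ (H →L[ℂ] H) t - T) := by
    refine IsSelfAdjoint.sub ?_ hT
    rw [Algebra.algebraMap_eq_smul_one]
    exact (IsSelfAdjoint.all t).smul (IsSelfAdjoint.one _)
  have hre : ∀ x : H, RCLike.re ⟪T x, x⟫_ℂ = RCLike.re ⟪x, T x⟫_ℂ := by
    intro x; exact inner_re_symm _ _
  rw [← sub_nonneg, ContinuousLinearMap.nonneg_iff_isPositive]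
  constructor
  · intro h x
    have h0 := h.re_inner_nonneg_right x
    rw [ContinuousLinearMap.sub_apply, inner_sub_right, map_sub, halg,
      VecStateAux.inner_re_smul] at h0
    linarith
  · intro h
    refine ContinuousLinearMap.isPositive_def'.mpr ⟨hsa, fun x => ?_⟩
    rw [ContinuousLinearMap.reApplyInnerSelf_apply, ContinuousLinearMap.sub_apply,
      inner_sub_left, map_sub]
    have h1 : RCLike.re ⟪(algebraMap ℝ (H →L[ℂ] H) t) x, x⟫_ℂ = t * ‖x‖ ^ 2 := by
      rw [halg, inner_re_symm]
      exact VecStateAux.inner_re_smul x t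
    rw [h1, hre]
    linarith [h x]

theorem VecStateAux.vecState_apply (π : A →⋆ₐ[ℂ] (H →L[ℂ] H)) (ξ : H) (a : A) :
    vecState π ξ a = ⟪ξ, π a ξ⟫_ℂ := rfl

theorem VecStateAux.vecState_star (π : A →⋆ₐ[ℂ] (H →L[ℂ] H)) (ξ : H) (b : A) :
    vecState π ξ (star b) = starRingEnd ℂ (vecState π ξ b) := by
  rw [VecStateAux.vecState_apply, VecStateAux.vecState_apply, map_star,
    ContinuousLinearMap.star_eq_adjoint, ContinuousLinearMap.adjoint_inner_right,
    ← inner_conj_symm]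

theorem VecStateAux.vecState_selfadj_part (π : A →⋆ₐ[ℂ] (H →L[ℂ] H)) (ξ : H) (b : A) :
    vecState π ξ ((2:ℂ)⁻¹ • (b + star b)) = ((vecState π ξ b).re : ℂ) := by
  have : vecState π ξ ((2:ℂ)⁻¹ • (b + star b))
      = (2:ℂ)⁻¹ * (vecState π ξ b + vecState π ξ (star b)) := by
    rw [map_smul, map_add]; rfl
  rw [this, VecStateAux.vecState_star, Complex.add_conj]
  push_cast
  ring

theorem VecStateAux.re_inner_selfadj_part (π : A →⋆ₐ[ℂ] (H →L[ℂ] H)) (ζ : H) (b : A) :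
    RCLike.re ⟪ζ, (π ((2:ℂ)⁻¹ • (b + star b))) ζ⟫_ℂ = ((vecState π ζ) b).re := by
  have h1 := VecStateAux.vecState_selfadj_part π ζ b
  rw [VecStateAux.vecState_apply] at h1
  rw [h1]
  simp

theorem VecStateAux.re_ofReal_sq (x : ℝ) : (((x : ℂ)) ^ 2).re = x ^ 2 := by
  rw [← Complex.ofReal_pow]; exact Complex.ofReal_re _

end Aux

section Transfer

variable {A H₁ H₂ : Type*} [CStarAlgebra A]
    [NormedAddCommGroup H₁] [InnerProductSpace ℂ H₁] [CompleteSpace H₁]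
    [NormedAddCommGroup H₂] [InnerProductSpace ℂ H₂] [CompleteSpace H₂]

theorem VecStateAux.transfer (π₁ : A →⋆ₐ[ℂ] (H₁ →L[ℂ] H₁)) (π₂ : A →⋆ₐ[ℂ] (H₂ →L[ℂ] H₂))
    (hker : ∀ a : A, π₂ a = 0 → π₁ a = 0) {c : A} (hc : IsSelfAdjoint c) {t : ℝ}
    (h : π₂ c ≤ algebraMap ℝ (H₂ →L[ℂ] H₂) t) : π₁ c ≤ algebraMap ℝ (H₁ →L[ℂ] H₁) t := by
  have hc1 : IsSelfAdjoint (π₁ c) := by rw [IsSelfAdjoint, ← map_star, hc.star_eq]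
  have hc2 : IsSelfAdjoint (π₂ c) := by rw [IsSelfAdjoint, ← map_star, hc.star_eq]
  set f : ℝ → ℝ := fun s => max (s - t) 0 with hf
  have hfc : Continuous f := (continuous_id.sub continuous_const).max continuous_const
  have h1 : ∀ x ∈ spectrum ℝ (π₂ c), f x = 0 := by
    intro x hx
    have hmem : t - x ∈ spectrum ℝ (algebraMap ℝ (H₂ →L[ℂ] H₂) t - π₂ c) := by
      rw [← spectrum.singleton_sub_eq]
      exact Set.sub_mem_sub rfl hx
    have hnn : (0 : H₂ →L[ℂ] H₂) ≤ algebraMap ℝ (H₂ →L[ℂ] H₂) t - π₂ c := sub_nonneg.mpr h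
    have := spectrum_nonneg_of_nonneg hnn hmem
    simp only [hf]
    rw [max_eq_right]
    linarith
  have h2 : cfc f (π₂ c) = 0 := by
    rw [cfc_congr (g := fun _ => (0 : ℝ)) h1]
    exact cfc_const_zero ℝ _
  have h3 : π₂ (cfc f c) = 0 := by
    rw [StarAlgHom.map_cfc π₂ f c (hf := hfc.continuousOn) (hφ := map_continuous π₂)]
    exact h2
  have h4 : cfc f (π₁ c) = 0 := by
    rw [← StarAlgHom.map_cfc π₁ f c (hf := hfc.continuousOn) (hφ := map_continuous π₁)]
    exact hker _ h3
  calc π₁ c = cfc (id : ℝ → ℝ) (π₁ c) := (cfc_id ℝ (π₁ c)).symm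
    _ ≤ cfc (fun s => f s + t) (π₁ c) := by
        refine cfc_mono (fun x hx => ?_) (by fun_prop) (by fun_prop)
        simp only [hf, id_eq]
        have := le_max_left (x - t) 0
        linarith
    _ = cfc f (π₁ c) + algebraMap ℝ (H₁ →L[ℂ] H₁) t :=
        cfc_add_const t f (π₁ c) hfc.continuousOn
    _ = algebraMap ℝ (H₁ →L[ℂ] H₁) t := by rw [h4, zero_add]

end Transfer

theorem statement0 {A H₁ H₂ : Type*} [CStarAlgebra A]
    [NormedAddCommGroup H₁] [InnerProductSpace ℂ H₁] [CompleteSpace H₁]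
    [NormedAddCommGroup H₂] [InnerProductSpace ℂ H₂] [CompleteSpace H₂]
    (π₁ : A →⋆ₐ[ℂ] (H₁ →L[ℂ] H₁)) (π₂ : A →⋆ₐ[ℂ] (H₂ →L[ℂ] H₂)) :
    List.TFAE
      [ (∀ a : A, ‖π₁ a‖ ≤ ‖π₂ a‖),
        (∀ a : A, π₂ a = 0 → π₁ a = 0),
        (∀ ξ : H₁, vecState π₁ ξ ∈
          closure (Submodule.span ℂ (Set.range (vecState π₂)) : Set (WeakDual ℂ A))),
        (∀ ξ : H₁, vecState π₁ ξ ∈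
          closure (convexHull ℝ
            {φ : WeakDual ℂ A | ∃ ζ : H₂, ‖ζ‖ = ‖ξ‖ ∧ φ = vecState π₂ ζ})) ] := by
  tfae_have 1 → 2 := by
    intro h a ha
    have h1 := h a
    rw [ha, norm_zero] at h1
    exact norm_le_zero_iff.mp h1
  tfae_have 4 → 1 := by
    intro h a
    refine ContinuousLinearMap.opNorm_le_bound _ (norm_nonneg _) fun ξ => ?_
    have hmem := h ξ
    set b : A := star a * a with hb
    set K : Set (WeakDual ℂ A) := {φ | (φ b).re ≤ ‖π₂ a‖ ^ 2 * ‖ξ‖ ^ 2} with hK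
    have hKclosed : IsClosed K :=
      IsClosed.preimage (Complex.continuous_re.comp (WeakDual.eval_continuous b))
        isClosed_Iic
    have hlin : IsLinearMap ℝ (fun φ : WeakDual ℂ A => (φ b).re) := by
      constructor
      · intro x y
        show ((x + y : WeakDual ℂ A) b).re = (x b).re + (y b).re
        rw [show ((x + y : WeakDual ℂ A)) b = x b + y b from rfl, Complex.add_re]
      · intro r x
        show (((r • x : WeakDual ℂ A)) b).re = r • ((x b).re)
        rw [show ((r • x : WeakDual ℂ A)) b = r • (x b) from rfl, Complex.real_smul]
        simp
    have hKconvex : Convex ℝ K := convex_halfSpace_le hlin _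
    have hSK : {φ : WeakDual ℂ A | ∃ ζ : H₂, ‖ζ‖ = ‖ξ‖ ∧ φ = vecState π₂ ζ} ⊆ K := by
      rintro φ ⟨ζ, hζ, rfl⟩
      show ((vecState π₂ ζ) b).re ≤ ‖π₂ a‖ ^ 2 * ‖ξ‖ ^ 2
      rw [VecStateAux.vecState_apply, hb, map_mul, map_star]
      have : (star (π₂ a) * (π₂ a)) ζ = ContinuousLinearMap.adjoint (π₂ a) ((π₂ a) ζ) := by
        rw [ContinuousLinearMap.star_eq_adjoint]; rfl
      rw [this, ContinuousLinearMap.adjoint_inner_right]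
      rw [show ⟪(π₂ a) ζ, (π₂ a) ζ⟫_ℂ = ((‖(π₂ a) ζ‖ : ℂ) ^ 2) from inner_self_eq_norm_sq_to_K _]
      have h2 : ‖(π₂ a) ζ‖ ≤ ‖π₂ a‖ * ‖ξ‖ := hζ ▸ (π₂ a).le_opNorm ζ
      have h3 : (0:ℝ) ≤ ‖(π₂ a) ζ‖ := norm_nonneg _
      rw [VecStateAux.re_ofReal_sq]
      nlinarith [norm_nonneg (π₂ a), norm_nonneg ξ]
    have hclos : closure (convexHull ℝ
        {φ : WeakDual ℂ A | ∃ ζ : H₂, ‖ζ‖ = ‖ξ‖ ∧ φ = vecState π₂ ζ}) ⊆ K :=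
      closure_minimal (convexHull_min hSK hKconvex) hKclosed
    have hfin : ((vecState π₁ ξ) b).re ≤ ‖π₂ a‖ ^ 2 * ‖ξ‖ ^ 2 := hclos hmem
    rw [VecStateAux.vecState_apply, hb, map_mul, map_star] at hfin
    have : (star (π₁ a) * (π₁ a)) ξ = ContinuousLinearMap.adjoint (π₁ a) ((π₁ a) ξ) := by
      rw [ContinuousLinearMap.star_eq_adjoint]; rfl
    rw [this, ContinuousLinearMap.adjoint_inner_right,
      show ⟪(π₁ a) ξ, (π₁ a) ξ⟫_ℂ = ((‖(π₁ a) ξ‖ : ℂ) ^ 2) from inner_self_eq_norm_sq_to_K _,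
      VecStateAux.re_ofReal_sq] at hfin
    nlinarith [norm_nonneg ((π₁ a) ξ), norm_nonneg (π₂ a), norm_nonneg ξ,
      mul_nonneg (norm_nonneg (π₂ a)) (norm_nonneg ξ)]
  tfae_have 4 → 3 := by
    intro h ξ
    refine closure_mono ?_ (h ξ)
    refine convexHull_min ?_ ?_
    · rintro φ ⟨ζ, hζ, rfl⟩
      exact Submodule.subset_span (Set.mem_range_self ζ)
    · have : ((Submodule.span ℂ (Set.range (vecState π₂))).restrictScalars ℝ :
          Set (WeakDual ℂ A)) = (Submodule.span ℂ (Set.range (vecState π₂)) :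
          Set (WeakDual ℂ A)) := rfl
      rw [← this]
      exact ((Submodule.span ℂ (Set.range (vecState π₂))).restrictScalars ℝ).convex
  tfae_have 3 → 2 := by
    intro h a ha
    set Z : Submodule ℂ (WeakDual ℂ A) := LinearMap.ker ((topDualPairing ℂ A).flip a) with hZ
    have hZclosed : IsClosed (Z : Set (WeakDual ℂ A)) := by
      have : (Z : Set (WeakDual ℂ A)) = (fun φ : WeakDual ℂ A => φ a) ⁻¹' {0} := rfl
      rw [this]
      exact IsClosed.preimage (WeakDual.eval_continuous a) isClosed_singleton
    have hsub : (Submodule.span ℂ (Set.range (vecState π₂)) : Set (WeakDual ℂ A))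
        ⊆ (Z : Set (WeakDual ℂ A)) := by
      refine Submodule.span_le.mpr ?_
      rintro _ ⟨ζ, rfl⟩
      show vecState π₂ ζ a = 0
      rw [VecStateAux.vecState_apply, ha]
      simp
    have hzero : ∀ ξ : H₁, ⟪(π₁ a) ξ, ξ⟫_ℂ = 0 := by
      intro ξ
      have hc : vecState π₁ ξ ∈ (Z : Set (WeakDual ℂ A)) :=
        closure_minimal hsub hZclosed (h ξ)
      have h0 : vecState π₁ ξ a = 0 := hc
      rw [VecStateAux.vecState_apply] at h0
      rw [← inner_conj_symm, h0, map_zero]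
    have hL : ((π₁ a : H₁ →L[ℂ] H₁) : H₁ →ₗ[ℂ] H₁) = 0 :=
      (inner_map_self_eq_zero _).mp hzero
    exact ContinuousLinearMap.coe_injective (hL.trans (ContinuousLinearMap.coe_zero).symm)
  tfae_have 2 → 4 := by
    intro h2 ξ
    by_cases hξ : ‖ξ‖ = 0
    · refine subset_closure (subset_convexHull ℝ _ ?_)
      refine ⟨0, by simp [hξ], ?_⟩
      have hξ0 : ξ = 0 := norm_eq_zero.mp hξ
      subst hξ0
      refine DFunLike.ext _ _ fun a => ?_
      show ⟪(0:H₁), (π₁ a) 0⟫_ℂ = ⟪(0:H₂), (π₂ a) 0⟫_ℂ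
      simp
    · by_contra hmem
      set S : Set (WeakDual ℂ A) :=
        {φ : WeakDual ℂ A | ∃ ζ : H₂, ‖ζ‖ = ‖ξ‖ ∧ φ = vecState π₂ ζ} with hS
      have : LocallyConvexSpace ℝ (WeakDual ℂ A) :=
        WeakBilin.locallyConvexSpace (B := topDualPairing ℂ A)
      obtain ⟨g, u, hgs, hgx⟩ := geometric_hahn_banach_closed_point
        ((convex_convexHull ℝ S).closure) isClosed_closure hmem
      obtain ⟨b, hb⟩ := VecStateAux.exists_re_eval g
      set c : A := (2:ℂ)⁻¹ • (b + star b) with hc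
      have hcsa : IsSelfAdjoint c := by
        rw [IsSelfAdjoint, hc, star_smul, star_add, star_star, add_comm]
        congr 1
        simp [Complex.star_def, ← Complex.ofReal_ofNat]
      -- bound on the π₂ side
      have hnormsq : (0:ℝ) < ‖ξ‖ ^ 2 := by positivity
      set t : ℝ := u / ‖ξ‖ ^ 2 with ht
      have hπ₂le : π₂ c ≤ algebraMap ℝ (H₂ →L[ℂ] H₂) t := by
        rw [VecStateAux.le_algebraMap_iff (by rw [IsSelfAdjoint, ← map_star, hcsa.star_eq])]
        intro ζ
        rcases eq_or_ne ζ 0 with rfl | hζ0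
        · simp
        · have hζpos : (0:ℝ) < ‖ζ‖ := norm_pos_iff.mpr hζ0
          set r : ℝ := ‖ξ‖ / ‖ζ‖ with hr
          have hrpos : 0 < r := by positivity
          have hwnorm : ‖r • ζ‖ = ‖ξ‖ := by
            rw [norm_smul, Real.norm_of_nonneg hrpos.le, hr]
            field_simp
          have hmemS : vecState π₂ (r • ζ) ∈ closure (convexHull ℝ S) :=
            subset_closure (subset_convexHull ℝ S ⟨r • ζ, hwnorm, rfl⟩)
          have hlt : ((vecState π₂ (r • ζ)) b).re < u := by
            rw [← hb]
            exact hgs _ hmemS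
          have hsc : RCLike.re ⟪r • ζ, (π₂ c) (r • ζ)⟫_ℂ
              = r ^ 2 * RCLike.re ⟪ζ, (π₂ c) ζ⟫_ℂ := by
            rw [RCLike.real_smul_eq_coe_smul (K := ℂ), map_smul, inner_smul_left,
              inner_smul_right, RCLike.conj_ofReal, ← mul_assoc, ← RCLike.ofReal_mul, ← sq,
              RCLike.re_ofReal_mul]
          have hval₂ : RCLike.re ⟪r • ζ, (π₂ c) (r • ζ)⟫_ℂ
              = ((vecState π₂ (r • ζ)) b).re := by
            rw [hc]; exact VecStateAux.re_inner_selfadj_part π₂ (r • ζ) b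
          have hlt2 : r ^ 2 * RCLike.re ⟪ζ, (π₂ c) ζ⟫_ℂ < u := by
            rw [← hsc, hval₂]; exact hlt
          have hz2 : (0:ℝ) < ‖ζ‖ ^ 2 := by positivity
          have hrr : r ^ 2 * ‖ζ‖ ^ 2 = ‖ξ‖ ^ 2 := by rw [hr]; field_simp
          rw [ht, div_mul_eq_mul_div, le_div_iff₀ hnormsq]
          have hsubst : RCLike.re ⟪ζ, (π₂ c) ζ⟫_ℂ * ‖ξ‖ ^ 2
              = (r ^ 2 * RCLike.re ⟪ζ, (π₂ c) ζ⟫_ℂ) * ‖ζ‖ ^ 2 := by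
            rw [← hrr]; ring
          rw [hsubst]
          exact (mul_lt_mul_of_pos_right hlt2 hz2).le
      -- transfer to π₁
      have hπ₁le := VecStateAux.transfer π₁ π₂ h2 hcsa hπ₂le
      rw [VecStateAux.le_algebraMap_iff (by rw [IsSelfAdjoint, ← map_star, hcsa.star_eq])]
        at hπ₁le
      have hfin := hπ₁le ξ
      have hval₁ : RCLike.re ⟪ξ, (π₁ c) ξ⟫_ℂ = ((vecState π₁ ξ) b).re := by
        rw [hc]; exact VecStateAux.re_inner_selfadj_part π₁ ξ b
      rw [hval₁, ht] at hfin
      rw [div_mul_eq_mul_div, mul_div_assoc, div_self hnormsq.ne', mul_one] at hfin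
      have hgt : u < ((vecState π₁ ξ) b).re := by rw [← hb]; exact hgx
      linarith
  tfae_finish
end

section
/- Let A be a unital C*-algebra, let H₁ and H₂ be complex Hilbert spaces, and let π₁ : A → B(H₁) and π₂ : A → B(H₂) be unital *-homomorphisms. Let V denote the weak*-closure of the linear span of {φ_ζ : ζ ∈ H₂} inside the continuous dual A*, where φ_ζ is the vector state of ζ with respect to π₂. Then the set W = {ξ ∈ H₁ : φ_ξ ∈ V} (where φ_ξ is the vector state of ξ with respect to π₁) is a norm-closed linear subspace of H₁ which is invariant under π₁(a) for every a ∈ A. -/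
open scoped CStarAlgebra InnerProductSpace

namespace Statement1Aux

variable {A H : Type*} [CStarAlgebra A] [NormedAddCommGroup H]
    [InnerProductSpace ℂ H] [CompleteSpace H] (π : A →⋆ₐ[ℂ] (H →L[ℂ] H))

lemma vecState_apply (ξ : H) (a : A) : vecState π ξ a = ⟪ξ, π a ξ⟫_ℂ := rfl

/-- The cross functional `a ↦ ⟪x, π a y⟫`. -/
noncomputable def cross (x y : H) : WeakDual ℂ A :=
  ((innerSL ℂ x).comp (ContinuousLinearMap.apply ℂ H y)).comp
    { toLinearMap := (π : A →ₐ[ℂ] (H →L[ℂ] H)).toLinearMap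
      cont := map_continuous π }

lemma cross_apply (x y : H) (a : A) : cross π x y a = ⟪x, π a y⟫_ℂ := rfl

lemma wadd_apply (φ ψ : WeakDual ℂ A) (a : A) : (φ + ψ) a = φ a + ψ a := rfl
lemma wsub_apply (φ ψ : WeakDual ℂ A) (a : A) : (φ - ψ) a = φ a - ψ a := rfl
lemma wsmul_apply (c : ℂ) (φ : WeakDual ℂ A) (a : A) : (c • φ) a = c * φ a := rfl

lemma four_smul_cross (x y : H) :
    (4 : ℂ) • cross π x y =
      vecState π (x + y) - vecState π (x - y)
        - Complex.I • vecState π (x + Complex.I • y)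
        + Complex.I • vecState π (x - Complex.I • y) := by
  refine DFunLike.ext _ _ fun a => ?_
  rw [wsmul_apply, wadd_apply, wsub_apply, wsub_apply, wsmul_apply, wsmul_apply,
    cross_apply, vecState_apply, vecState_apply, vecState_apply, vecState_apply]
  simp only [map_add, map_sub, map_smul, inner_add_left, inner_add_right, inner_sub_left,
    inner_sub_right, inner_smul_left, inner_smul_right, Complex.conj_I, smul_eq_mul]
  linear_combination (2 * ⟪x, (π a) y⟫_ℂ - 2 * ⟪y, (π a) x⟫_ℂ) * Complex.I_sq

lemma cross_mem_span (x y : H) :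
    cross π x y ∈ Submodule.span ℂ (Set.range (vecState π)) := by
  have hv : ∀ z : H, vecState π z ∈ Submodule.span ℂ (Set.range (vecState π)) :=
    fun z => Submodule.subset_span ⟨z, rfl⟩
  have hmem : (4 : ℂ) • cross π x y ∈ Submodule.span ℂ (Set.range (vecState π)) := by
    rw [four_smul_cross]
    exact Submodule.add_mem _
      (Submodule.sub_mem _ (Submodule.sub_mem _ (hv _) (hv _))
        (Submodule.smul_mem _ _ (hv _))) (Submodule.smul_mem _ _ (hv _))
  have h := Submodule.smul_mem _ ((4 : ℂ)⁻¹) hmem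
  rwa [smul_smul, inv_mul_cancel₀ (by norm_num), one_smul] at h


/-- Precomposition with a continuous linear map, as a linear map on the weak dual. -/
noncomputable def precompL (u : A →L[ℂ] A) : WeakDual ℂ A →ₗ[ℂ] WeakDual ℂ A where
  toFun φ := ContinuousLinearMap.comp φ u
  map_add' φ ψ := DFunLike.ext _ _ fun _ => rfl
  map_smul' c φ := DFunLike.ext _ _ fun _ => rfl

lemma precompL_apply (u : A →L[ℂ] A) (φ : WeakDual ℂ A) (a : A) :
    precompL u φ a = φ (u a) := rfl

lemma precompL_continuous (u : A →L[ℂ] A) :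
    Continuous (precompL (A := A) u) :=
  WeakDual.continuous_of_continuous_eval fun a => WeakDual.eval_continuous (u a)

lemma precompL_mem_closure (u : A →L[ℂ] A)
    (h : ∀ ζ : H, precompL u (vecState π ζ) ∈
      Submodule.span ℂ (Set.range (vecState π)))
    {φ : WeakDual ℂ A}
    (hφ : φ ∈ closure ((Submodule.span ℂ (Set.range (vecState π)) :
      Submodule ℂ (WeakDual ℂ A)) : Set (WeakDual ℂ A))) :
    precompL u φ ∈ closure ((Submodule.span ℂ (Set.range (vecState π)) :
      Submodule ℂ (WeakDual ℂ A)) : Set (WeakDual ℂ A)) := by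
  set S : Submodule ℂ (WeakDual ℂ A) := Submodule.span ℂ (Set.range (vecState π))
  have hmapsTo : Set.MapsTo (precompL u) (S : Set (WeakDual ℂ A))
      (S : Set (WeakDual ℂ A)) := by
    intro ψ hψ
    have hle : S.map (precompL u) ≤ S := by
      rw [Submodule.map_span, Submodule.span_le]
      rintro _ ⟨_, ⟨ζ, rfl⟩, rfl⟩
      exact h ζ
    exact hle ⟨ψ, hψ, rfl⟩
  exact hmapsTo.closure (precompL_continuous u) hφ

lemma precompL_mulLeft (b : A) (ζ : H) :
    precompL (ContinuousLinearMap.mul ℂ A b) (vecState π ζ)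
      = cross π (π (star b) ζ) ζ := by
  refine DFunLike.ext _ _ fun c => ?_
  rw [precompL_apply, cross_apply, ContinuousLinearMap.mul_apply', vecState_apply, map_mul,
    map_star, ContinuousLinearMap.star_eq_adjoint, ContinuousLinearMap.adjoint_inner_left]
  rfl

lemma precompL_mulRight (b : A) (ζ : H) :
    precompL ((ContinuousLinearMap.mul ℂ A).flip b) (vecState π ζ)
      = cross π ζ (π b ζ) := by
  refine DFunLike.ext _ _ fun c => ?_
  rw [precompL_apply, cross_apply, ContinuousLinearMap.flip_apply,
    ContinuousLinearMap.mul_apply', vecState_apply, map_mul]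
  rfl

end Statement1Aux

section Instances

variable (A : Type*) [CStarAlgebra A]

instance : IsScalarTower ℝ ℂ (WeakDual ℂ A) :=
  ⟨fun r c φ => DFunLike.ext _ _ fun a => smul_assoc r c (φ a)⟩

instance : LocallyConvexSpace ℝ (WeakDual ℂ A) :=
  (topDualPairing ℂ A).weakBilin_withSeminorms.toLocallyConvexSpace

end Instances

open Statement1Aux in
theorem statement1 {A H₁ H₂ : Type*} [CStarAlgebra A]
    [NormedAddCommGroup H₁] [InnerProductSpace ℂ H₁] [CompleteSpace H₁]
    [NormedAddCommGroup H₂] [InnerProductSpace ℂ H₂] [CompleteSpace H₂]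
    (π₁ : A →⋆ₐ[ℂ] (H₁ →L[ℂ] H₁)) (π₂ : A →⋆ₐ[ℂ] (H₂ →L[ℂ] H₂))
    (V : Set (WeakDual ℂ A))
    (hV : V = closure (Submodule.span ℂ (Set.range (vecState π₂)) : Set (WeakDual ℂ A)))
    (W : Set H₁) (hW : W = {ξ : H₁ | vecState π₁ ξ ∈ V}) :
    IsClosed W ∧ (∃ S : Submodule ℂ H₁, (S : Set H₁) = W) ∧
      (∀ a : A, ∀ ξ ∈ W, π₁ a ξ ∈ W) := by
  classical
  subst hW
  set S : Submodule ℂ (WeakDual ℂ A) := Submodule.span ℂ (Set.range (vecState π₂)) with hSdef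
  -- The annihilator of `V` in `A`.
  set N : Set A := {a : A | ∀ φ : WeakDual ℂ A, φ ∈ V → φ a = 0} with hNdef
  -- `V` is invariant under suitable precompositions
  have hVinv : ∀ u : A →L[ℂ] A,
      (∀ ζ : H₂, precompL u (vecState π₂ ζ) ∈ S) →
      ∀ φ ∈ V, precompL u φ ∈ V := by
    intro u hu φ hφ
    rw [hV] at hφ ⊢
    exact precompL_mem_closure π₂ u hu hφ
  -- `N` is a left ideal
  have hNl : ∀ b : A, ∀ a ∈ N, b * a ∈ N := by
    intro b a ha φ hφ
    have h1 : precompL (ContinuousLinearMap.mul ℂ A b) φ ∈ V :=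
      hVinv _ (fun ζ => by rw [precompL_mulLeft]; exact cross_mem_span π₂ _ _) φ hφ
    exact ha _ h1
  -- `N` is a right ideal
  have hNr : ∀ b : A, ∀ a ∈ N, a * b ∈ N := by
    intro b a ha φ hφ
    have h1 : precompL ((ContinuousLinearMap.mul ℂ A).flip b) φ ∈ V :=
      hVinv _ (fun ζ => by rw [precompL_mulRight]; exact cross_mem_span π₂ _ _) φ hφ
    exact ha _ h1
  -- the key characterization of membership in `W`
  have hKiff : ∀ ξ : H₁, vecState π₁ ξ ∈ V ↔ ∀ a ∈ N, π₁ a ξ = 0 := by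
    intro ξ
    constructor
    · intro hξ a ha
      have h2 : star a * a ∈ N := hNl (star a) a ha
      have h0 : vecState π₁ ξ (star a * a) = 0 := h2 _ hξ
      rw [vecState_apply, map_mul, map_star, ContinuousLinearMap.star_eq_adjoint] at h0
      rw [show ((ContinuousLinearMap.adjoint (π₁ a) * π₁ a) ξ)
          = ContinuousLinearMap.adjoint (π₁ a) (π₁ a ξ) from rfl,
        ContinuousLinearMap.adjoint_inner_right] at h0
      exact inner_self_eq_zero.mp h0
    · intro hvanish
      by_contra hξV
      have hVconv : Convex ℝ V := by
        rw [hV, ← Submodule.topologicalClosure_coe]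
        intro x hx y hy c d hc hd hcd
        exact Submodule.add_mem _ (Submodule.smul_of_tower_mem _ c hx)
          (Submodule.smul_of_tower_mem _ d hy)
      have hVclosed : IsClosed V := by rw [hV]; exact isClosed_closure
      obtain ⟨f, u, hfV, hfξ⟩ :=
        @RCLike.geometric_hahn_banach_closed_point ℂ _ _ _ _ _ _ _ _ _ _ _
          (topDualPairing ℂ A).weakBilin_withSeminorms.toLocallyConvexSpace hVconv hVclosed hξV
      have h0V : (0 : WeakDual ℂ A) ∈ V := by
        rw [hV]; exact subset_closure S.zero_mem
      have hu0 : 0 < u := by simpa using hfV 0 h0V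
      -- `f` vanishes on `V`
      have hf0 : ∀ v ∈ V, f v = 0 := by
        intro v hv
        by_contra hfv
        have hnsq : 0 < Complex.normSq (f v) := Complex.normSq_pos.mpr hfv
        set t : ℝ := (u + 1) / Complex.normSq (f v) with ht
        have hmem : ((t : ℂ) * (starRingEnd ℂ) (f v)) • v ∈ V := by
          rw [hV, ← Submodule.topologicalClosure_coe] at hv ⊢
          exact Submodule.smul_mem _ _ hv
        have hlt := hfV _ hmem
        rw [map_smul, smul_eq_mul] at hlt
        have hre : RCLike.re ((t : ℂ) * (starRingEnd ℂ) (f v) * f v) = u + 1 := by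
          rw [mul_assoc, mul_comm ((starRingEnd ℂ) (f v)) (f v), Complex.mul_conj,
            ← Complex.ofReal_mul, RCLike.re_to_complex, Complex.ofReal_re,
            div_mul_cancel₀ _ hnsq.ne']
        rw [hre] at hlt
        linarith
      -- `f` is given by evaluation at some `a : A`
      haveI : Nonempty A := ⟨1⟩
      have hp := (topDualPairing ℂ A).weakBilin_withSeminorms
      obtain ⟨sfin, C, hC, hle⟩ :=
        Seminorm.bound_of_continuous hp
          (LinearMap.toSeminorm (f : WeakDual ℂ A →ₗ[ℂ] ℂ)) (by exact f.continuous.norm)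
      have hker : ∀ φ : WeakDual ℂ A, (∀ b ∈ sfin, φ b = 0) → f φ = 0 := by
        intro φ hφ
        have h2 : (sfin.sup ((topDualPairing ℂ A).toSeminormFamily)) φ ≤ 0 :=
          Seminorm.finset_sup_apply_le le_rfl fun b hb =>
            le_of_eq (by change ‖φ b‖ = 0; rw [
              hφ b hb, norm_zero])
        have h1 : ‖f φ‖ ≤ (C : ℝ) * (sfin.sup ((topDualPairing ℂ A).toSeminormFamily)) φ :=
          Seminorm.le_def.mp hle φ
        have h3 : (C : ℝ) * (sfin.sup ((topDualPairing ℂ A).toSeminormFamily)) φ ≤ 0 := by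
          have := mul_le_mul_of_nonneg_left h2 C.coe_nonneg
          simpa using this
        exact norm_le_zero_iff.mp (h1.trans h3)
      set L : sfin → (WeakDual ℂ A) →ₗ[ℂ] ℂ := fun b => (topDualPairing ℂ A).flip (b : A)
        with hLdef
      have hspan : f.toLinearMap ∈ Submodule.span ℂ (Set.range L) := by
        apply mem_span_of_iInf_ker_le_ker
        intro φ hφ
        simp only [Submodule.mem_iInf, LinearMap.mem_ker] at hφ
        refine LinearMap.mem_ker.mpr (hker φ fun b hb => ?_)
        have h := hφ ⟨b, hb⟩
        simp only [hLdef, LinearMap.flip_apply, topDualPairing_apply] at h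
        exact h
      have hrange : f.toLinearMap ∈ LinearMap.range ((topDualPairing ℂ A).flip) := by
        refine (Submodule.span_le (M := StrongDual ℂ A →ₗ[ℂ] ℂ)).mpr ?_ hspan
        rintro _ ⟨b, rfl⟩
        exact ⟨(b : A), rfl⟩
      obtain ⟨a, ha⟩ := hrange
      have hfa : ∀ φ : WeakDual ℂ A, f φ = φ a := by
        intro φ
        have := LinearMap.congr_fun ha φ
        change φ a = f φ at this
        exact this.symm
      have haN : a ∈ N := by
        intro φ hφ
        rw [← hfa φ]
        exact hf0 φ hφ
      have hπa : π₁ a ξ = 0 := hvanish a haN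
      have hzero : RCLike.re (f (vecState π₁ ξ)) = 0 := by
        rw [hfa, vecState_apply, hπa, inner_zero_right]
        simp
      rw [hzero] at hfξ
      linarith
  refine ⟨?_, ?_, ?_⟩
  · have hWeq : {ξ : H₁ | vecState π₁ ξ ∈ V} = ⋂ a ∈ N, {ξ : H₁ | π₁ a ξ = 0} := by
      ext ξ
      simp only [Set.mem_setOf_eq, Set.mem_iInter]
      exact hKiff ξ
    rw [hWeq]
    exact isClosed_biInter fun a ha => isClosed_eq (π₁ a).continuous continuous_const
  · refine ⟨⨅ a ∈ N, LinearMap.ker (π₁ a : H₁ →ₗ[ℂ] H₁), ?_⟩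
    ext ξ
    simp only [SetLike.mem_coe, Submodule.mem_iInf, LinearMap.mem_ker, Set.mem_setOf_eq]
    exact (hKiff ξ).symm
  · intro a ξ hξ
    rw [Set.mem_setOf_eq, hKiff] at hξ ⊢
    intro b hb
    have hba : b * a ∈ N := hNr a b hb
    have heq : π₁ b (π₁ a ξ) = π₁ (b * a) ξ := by rw [map_mul]; rfl
    rw [heq]
    exact hξ _ hba
end

section
/- Let A be a unital C*-algebra, let H₁ and H₂ be complex Hilbert spaces, and let π₁ : A → B(H₁) and π₂ : A → B(H₂) be unital *-homomorphisms. Suppose there are subsets B ⊆ A and D ⊆ H₁ such that the closed linear span of B equals A and the closed linear span of {π₁(a)ξ : a ∈ A, ξ ∈ D} equals H₁. Assume that for every ξ ∈ D there is a constant C_ξ ≥ 0 such that for all k and all b₁, …, b_k ∈ B, the tuple (φ_ξ(b₁), …, φ_ξ(b_k)) ∈ ℂᵏ lies in the closure of the convex hull of the set {(φ_ζ(b₁), …, φ_ζ(b_k)) : ζ ∈ H₂, ‖ζ‖ ≤ C_ξ}. Then ‖π₁(a)‖ ≤ ‖π₂(a)‖ for every a ∈ A. -/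
open scoped InnerProductSpace

private lemma aux_sq {H : Type*} [NormedAddCommGroup H] [InnerProductSpace ℂ H]
    [CompleteSpace H] (T : H →L[ℂ] H) (hT : IsSelfAdjoint T) (v : H) :
    ‖T v‖ ^ 2 ≤ ‖v‖ * ‖T (T v)‖ := by
  have h2 : ⟪T v, T v⟫_ℂ = ⟪v, T (T v)⟫_ℂ := by
    have h := ContinuousLinearMap.adjoint_inner_right T v (T v)
    rw [hT.adjoint_eq] at h
    exact h.symm
  have h1 : (‖T v‖ ^ 2 : ℝ) = ‖⟪T v, T v⟫_ℂ‖ := by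
    rw [inner_self_eq_norm_sq_to_K]
    simp
  rw [h1, h2]
  exact norm_inner_le_norm _ _

private lemma aux_pow {H : Type*} [NormedAddCommGroup H] [InnerProductSpace ℂ H]
    [CompleteSpace H] (T : H →L[ℂ] H) (hT : IsSelfAdjoint T) (v : H) :
    ∀ n : ℕ, ‖T v‖ ^ (2 ^ n) ≤ ‖v‖ ^ (2 ^ n - 1) * ‖(T ^ (2 ^ n)) v‖ := by
  intro n
  induction n with
  | zero => simp
  | succ n ih =>
    have hS : IsSelfAdjoint (T ^ (2 ^ n)) := hT.pow _
    have h1 := aux_sq (T ^ (2 ^ n)) hS v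
    have h2 : (T ^ (2 ^ n)) ((T ^ (2 ^ n)) v) = (T ^ (2 ^ (n + 1))) v := by
      rw [show (2:ℕ) ^ (n+1) = 2 ^ n + 2 ^ n by ring, pow_add]
      rfl
    rw [h2] at h1
    have hn1 : 1 ≤ 2 ^ n := Nat.one_le_two_pow
    calc ‖T v‖ ^ (2 ^ (n+1)) = (‖T v‖ ^ (2 ^ n)) ^ 2 := by
          rw [← pow_mul, pow_succ]
      _ ≤ (‖v‖ ^ (2 ^ n - 1) * ‖(T ^ (2 ^ n)) v‖) ^ 2 :=
          pow_le_pow_left₀ (by positivity) ih 2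
      _ = ‖v‖ ^ (2 * (2 ^ n - 1)) * ‖(T ^ (2 ^ n)) v‖ ^ 2 := by
          rw [mul_pow, ← pow_mul, mul_comm (2 ^ n - 1) 2]
      _ ≤ ‖v‖ ^ (2 * (2 ^ n - 1)) * (‖v‖ * ‖(T ^ (2 ^ (n+1))) v‖) := by
          gcongr
      _ = ‖v‖ ^ (2 ^ (n+1) - 1) * ‖(T ^ (2 ^ (n+1))) v‖ := by
          rw [show 2 ^ (n+1) - 1 = 2 * (2 ^ n - 1) + 1 by omega, pow_succ]
          ring

private lemma aux_lim {a b K : ℝ} (ha : 0 ≤ a) (hb : 0 ≤ b)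
    (h : ∀ n : ℕ, a ^ (2 ^ n) ≤ K * b ^ (2 ^ n)) : a ≤ b := by
  by_contra hab
  push_neg at hab
  have ha0 : 0 < a := lt_of_le_of_lt hb hab
  rcases eq_or_lt_of_le hb with hb0 | hb0
  · have h1 := h 1
    rw [← hb0] at h1
    norm_num at h1
    nlinarith
  · have hr1 : 1 < a / b := (one_lt_div hb0).mpr hab
    have hK : ∀ n : ℕ, (a / b) ^ (2 ^ n) ≤ K := by
      intro n
      rw [div_pow, div_le_iff₀ (by positivity)]
      exact h n
    obtain ⟨m, hm⟩ := pow_unbounded_of_one_lt K hr1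
    have : (a / b) ^ m ≤ (a / b) ^ (2 ^ m) :=
      pow_le_pow_right₀ hr1.le (Nat.lt_two_pow_self (n := m)).le
    linarith [hK m]

set_option maxHeartbeats 2000000 in
theorem statement2 {A H₁ H₂ : Type*} [CStarAlgebra A]
    [NormedAddCommGroup H₁] [InnerProductSpace ℂ H₁] [CompleteSpace H₁]
    [NormedAddCommGroup H₂] [InnerProductSpace ℂ H₂] [CompleteSpace H₂]
    (π₁ : A →⋆ₐ[ℂ] (H₁ →L[ℂ] H₁)) (π₂ : A →⋆ₐ[ℂ] (H₂ →L[ℂ] H₂))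
    (B : Set A) (D : Set H₁)
    (hB : closure (Submodule.span ℂ B : Set A) = Set.univ)
    (hD : closure (Submodule.span ℂ {v : H₁ | ∃ a : A, ∃ ξ ∈ D, v = π₁ a ξ} : Set H₁)
            = Set.univ)
    (hmain : ∀ ξ ∈ D, ∃ C : ℝ, 0 ≤ C ∧ ∀ (k : ℕ) (b : Fin k → A), (∀ j, b j ∈ B) →
      (fun j => ⟪ξ, π₁ (b j) ξ⟫_ℂ) ∈
        closure (convexHull ℝ
          {v : Fin k → ℂ | ∃ ζ : H₂, ‖ζ‖ ≤ C ∧ v = fun j => ⟪ζ, π₂ (b j) ζ⟫_ℂ})) :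
    ∀ a : A, ‖π₁ a‖ ≤ ‖π₂ a‖ := by
  have cont1 : Continuous π₁ := AddMonoidHomClass.continuous_of_bound π₁.toNonUnitalStarAlgHom 1
    (by simpa using fun a => NonUnitalStarAlgHom.norm_apply_le π₁.toNonUnitalStarAlgHom a)
  have cont2 : Continuous π₂ := AddMonoidHomClass.continuous_of_bound π₂.toNonUnitalStarAlgHom 1
    (by simpa using fun a => NonUnitalStarAlgHom.norm_apply_le π₂.toNonUnitalStarAlgHom a)
  -- Step A : state bound
  have stepA : ∀ ξ ∈ D, ∃ C : ℝ, 0 ≤ C ∧ ∀ x : A, ‖⟪ξ, π₁ x ξ⟫_ℂ‖ ≤ C ^ 2 * ‖π₂ x‖ := by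
    intro ξ hξ
    obtain ⟨C, hC, hconv⟩ := hmain ξ hξ
    refine ⟨C, hC, ?_⟩
    have hspan : ∀ x ∈ Submodule.span ℂ B, ‖⟪ξ, π₁ x ξ⟫_ℂ‖ ≤ C ^ 2 * ‖π₂ x‖ := by
      intro x hx
      obtain ⟨n, f, g, hfg⟩ := Submodule.mem_span_set'.mp hx
      have hmem := hconv n (fun j => (g j : A)) (fun j => (g j).2)
      set L : (Fin n → ℂ) → ℂ := fun v => ∑ j, f j * v j with hL
      have hLlin : IsLinearMap ℝ L := by
        constructor
        · intro u w
          simp only [hL, Pi.add_apply, mul_add, Finset.sum_add_distrib]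
        · intro c u
          simp only [hL, Pi.smul_apply, Finset.smul_sum, mul_smul_comm]
      have hLcont : Continuous L :=
        continuous_finset_sum _ fun j _ => continuous_const.mul (continuous_apply j)
      set T : Set (Fin n → ℂ) := L ⁻¹' Metric.closedBall 0 (C ^ 2 * ‖π₂ x‖) with hT
      have hTconv : Convex ℝ T := (convex_closedBall _ _).is_linear_preimage hLlin
      have hTclosed : IsClosed T := Metric.isClosed_closedBall.preimage hLcont
      have hsub : {v : Fin n → ℂ | ∃ ζ : H₂, ‖ζ‖ ≤ C ∧ v = fun j => ⟪ζ, π₂ ((g j : A)) ζ⟫_ℂ}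
          ⊆ T := by
        rintro v ⟨ζ, hζ, rfl⟩
        have hsum : (L fun j => ⟪ζ, π₂ ((g j : A)) ζ⟫_ℂ) = ⟪ζ, π₂ x ζ⟫_ℂ := by
          rw [← hfg, map_sum]
          simp only [hL]
          rw [ContinuousLinearMap.sum_apply, inner_sum]
          congr 1
          ext j
          rw [map_smul, ContinuousLinearMap.smul_apply, inner_smul_right]
        simp only [hT, Set.mem_preimage, Metric.mem_closedBall, dist_zero_right]
        rw [hsum]
        have h1 : ‖⟪ζ, π₂ x ζ⟫_ℂ‖ ≤ ‖ζ‖ * ‖π₂ x ζ‖ := norm_inner_le_norm _ _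
        have h2 : ‖π₂ x ζ‖ ≤ ‖π₂ x‖ * ‖ζ‖ := (π₂ x).le_opNorm ζ
        have h3 : (0:ℝ) ≤ ‖ζ‖ := norm_nonneg _
        have h4 : (0:ℝ) ≤ ‖π₂ x‖ := norm_nonneg _
        have h5 : ‖ζ‖ * ‖ζ‖ ≤ C * C := mul_le_mul hζ hζ h3 hC
        nlinarith [mul_le_mul_of_nonneg_right h5 h4]
      have hmem2 := closure_minimal (convexHull_min hsub hTconv) hTclosed hmem
      simp only [hT, Set.mem_preimage, Metric.mem_closedBall, dist_zero_right] at hmem2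
      have hsum1 : (L fun j => ⟪ξ, π₁ ((g j : A)) ξ⟫_ℂ) = ⟪ξ, π₁ x ξ⟫_ℂ := by
        rw [← hfg, map_sum]
        simp only [hL]
        rw [ContinuousLinearMap.sum_apply, inner_sum]
        congr 1
        ext j
        rw [map_smul, ContinuousLinearMap.smul_apply, inner_smul_right]
      rwa [hsum1] at hmem2
    intro x
    have hcl : IsClosed {x : A | ‖⟪ξ, π₁ x ξ⟫_ℂ‖ ≤ C ^ 2 * ‖π₂ x‖} := by
      apply isClosed_le
      · have c1 : Continuous fun x : A => (π₁ x) ξ := cont1.clm_apply continuous_const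
        have c2 : Continuous fun x : A => ⟪ξ, (π₁ x) ξ⟫_ℂ := Continuous.inner continuous_const c1
        exact c2.norm
      · exact continuous_const.mul cont2.norm
    have hxcl : x ∈ closure (Submodule.span ℂ B : Set A) := by rw [hB]; trivial
    exact hcl.closure_subset_iff.mpr hspan hxcl
  -- Step A' : vector bound on D
  have stepA' : ∀ ξ ∈ D, ∃ C : ℝ, 0 ≤ C ∧ ∀ a : A, ‖π₁ a ξ‖ ≤ C * ‖π₂ a‖ := by
    intro ξ hξ
    obtain ⟨C, hC, hkey⟩ := stepA ξ hξ
    refine ⟨C, hC, fun a => ?_⟩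
    have e1 : ⟪ξ, π₁ (star a * a) ξ⟫_ℂ = ((‖π₁ a ξ‖ ^ 2 : ℝ) : ℂ) := by
      rw [map_mul, map_star, ContinuousLinearMap.mul_apply, ContinuousLinearMap.star_eq_adjoint,
        ContinuousLinearMap.adjoint_inner_right, inner_self_eq_norm_sq_to_K]
      norm_cast
    have h := hkey (star a * a)
    rw [e1] at h
    have h2 : ‖((‖π₁ a ξ‖ ^ 2 : ℝ) : ℂ)‖ = ‖π₁ a ξ‖ ^ 2 := by simp
    rw [h2] at h
    have h3 : ‖π₂ (star a * a)‖ = ‖π₂ a‖ * ‖π₂ a‖ := by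
      rw [map_mul, map_star, CStarRing.norm_star_mul_self]
    rw [h3] at h
    nlinarith [norm_nonneg (π₁ a ξ), norm_nonneg (π₂ a), mul_nonneg hC (norm_nonneg (π₂ a))]
  -- Step B : bound on the span of the generating vectors
  set G : Set H₁ := {v : H₁ | ∃ a : A, ∃ ξ ∈ D, v = π₁ a ξ} with hG
  have stepB : ∀ v ∈ Submodule.span ℂ G, ∃ K : ℝ, 0 ≤ K ∧ ∀ a : A, ‖π₁ a v‖ ≤ K * ‖π₂ a‖ := by
    intro v hv
    induction hv using Submodule.span_induction with
    | mem v hv =>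
      obtain ⟨c, ξ, hξ, rfl⟩ := hv
      obtain ⟨C, hC, hCb⟩ := stepA' ξ hξ
      refine ⟨C * ‖π₂ c‖, mul_nonneg hC (norm_nonneg _), fun a => ?_⟩
      have e : π₁ a ((π₁ c) ξ) = π₁ (a * c) ξ := by rw [map_mul]; rfl
      calc ‖π₁ a ((π₁ c) ξ)‖ = ‖π₁ (a * c) ξ‖ := by rw [e]
        _ ≤ C * ‖π₂ (a * c)‖ := hCb (a * c)
        _ = C * ‖π₂ a * π₂ c‖ := by rw [map_mul]
        _ ≤ C * (‖π₂ a‖ * ‖π₂ c‖) := by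
            gcongr
            exact norm_mul_le _ _
        _ = C * ‖π₂ c‖ * ‖π₂ a‖ := by ring
    | zero => exact ⟨0, le_refl 0, by simp⟩
    | add u w _ _ hu hw =>
      obtain ⟨K₁, hK₁, h₁⟩ := hu
      obtain ⟨K₂, hK₂, h₂⟩ := hw
      refine ⟨K₁ + K₂, by linarith, fun a => ?_⟩
      calc ‖π₁ a (u + w)‖ = ‖π₁ a u + π₁ a w‖ := by rw [map_add]
        _ ≤ ‖π₁ a u‖ + ‖π₁ a w‖ := norm_add_le _ _
        _ ≤ K₁ * ‖π₂ a‖ + K₂ * ‖π₂ a‖ := add_le_add (h₁ a) (h₂ a)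
        _ = (K₁ + K₂) * ‖π₂ a‖ := by ring
    | smul c u _ hu =>
      obtain ⟨K, hK, h₁⟩ := hu
      refine ⟨‖c‖ * K, mul_nonneg (norm_nonneg _) hK, fun a => ?_⟩
      calc ‖π₁ a (c • u)‖ = ‖c • π₁ a u‖ := by rw [map_smul]
        _ = ‖c‖ * ‖π₁ a u‖ := norm_smul _ _
        _ ≤ ‖c‖ * (K * ‖π₂ a‖) := by
            gcongr
            exact h₁ a
        _ = ‖c‖ * K * ‖π₂ a‖ := by ring
  -- Step C : operator norm bound for selfadjoint elements
  have stepC : ∀ x : A, IsSelfAdjoint x → ‖π₁ x‖ ≤ ‖π₂ x‖ := by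
    intro x hx
    have hsa1 : IsSelfAdjoint (π₁ x) := by
      rw [IsSelfAdjoint, ← map_star, hx.star_eq]
    refine ContinuousLinearMap.opNorm_le_bound _ (norm_nonneg _) fun v => ?_
    have hWcl : IsClosed {v : H₁ | ‖π₁ x v‖ ≤ ‖π₂ x‖ * ‖v‖} :=
      isClosed_le ((π₁ x).continuous.norm) (continuous_const.mul continuous_norm)
    have hWspan : ∀ v ∈ Submodule.span ℂ G, ‖π₁ x v‖ ≤ ‖π₂ x‖ * ‖v‖ := by
      intro v hv
      obtain ⟨K, hK, hKb⟩ := stepB v hv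
      rcases eq_or_ne v 0 with rfl | hv0
      · simp
      have hvpos : 0 < ‖v‖ := norm_pos_iff.mpr hv0
      refine aux_lim (norm_nonneg _) (mul_nonneg (norm_nonneg _) (norm_nonneg _))
        (K := K / ‖v‖) fun n => ?_
      have hp : (0:ℕ) < 2 ^ n := by positivity
      have e1 : (π₁ x) ^ (2 ^ n) = π₁ (x ^ (2 ^ n)) := (map_pow π₁ x (2 ^ n)).symm
      have b1 : ‖π₁ x v‖ ^ (2 ^ n) ≤ ‖v‖ ^ (2 ^ n - 1) * ‖((π₁ x) ^ (2 ^ n)) v‖ :=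
        aux_pow (π₁ x) hsa1 v n
      have b2 : ‖((π₁ x) ^ (2 ^ n)) v‖ ≤ K * ‖π₂ x‖ ^ (2 ^ n) := by
        rw [e1]
        calc ‖π₁ (x ^ (2 ^ n)) v‖ ≤ K * ‖π₂ (x ^ (2 ^ n))‖ := hKb _
          _ = K * ‖(π₂ x) ^ (2 ^ n)‖ := by rw [map_pow]
          _ ≤ K * ‖π₂ x‖ ^ (2 ^ n) := by
              gcongr
              exact norm_pow_le' _ hp
      have e2 : K / ‖v‖ * (‖π₂ x‖ * ‖v‖) ^ (2 ^ n)
          = ‖v‖ ^ (2 ^ n - 1) * (K * ‖π₂ x‖ ^ (2 ^ n)) := by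
        rw [mul_pow, show (2:ℕ) ^ n = (2 ^ n - 1) + 1 by omega, pow_succ]
        field_simp
        ring_nf
        simp only [Nat.add_sub_cancel_left]
      rw [e2]
      calc ‖π₁ x v‖ ^ (2 ^ n) ≤ ‖v‖ ^ (2 ^ n - 1) * ‖((π₁ x) ^ (2 ^ n)) v‖ := b1
        _ ≤ ‖v‖ ^ (2 ^ n - 1) * (K * ‖π₂ x‖ ^ (2 ^ n)) := by
            gcongr
    have hvcl : v ∈ closure (Submodule.span ℂ G : Set H₁) := by rw [hD]; trivial
    exact hWcl.closure_subset_iff.mpr hWspan hvcl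
  -- Step D : general elements
  intro a
  have hsa : IsSelfAdjoint (star a * a) := IsSelfAdjoint.star_mul_self a
  have h := stepC (star a * a) hsa
  have e1 : ‖π₁ (star a * a)‖ = ‖π₁ a‖ * ‖π₁ a‖ := by
    rw [map_mul, map_star, CStarRing.norm_star_mul_self]
  have e2 : ‖π₂ (star a * a)‖ = ‖π₂ a‖ * ‖π₂ a‖ := by
    rw [map_mul, map_star, CStarRing.norm_star_mul_self]
  rw [e1, e2] at h
  nlinarith [norm_nonneg (π₁ a), norm_nonneg (π₂ a)]
end
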